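/- For every n ≥ 1, R_n(1/23) equals the set of RGFs w of length n for which there exist l ≥ 0 and m ≥ 1 with l + m = n such that w is obtained from the word 1^l 2 3 ⋯ m (meaning l copies of 1 followed by the letters 2,3,…,m, these being absent when m = 1) by inserting a single additional letter 1 at some position, the result being an RGF. -/

import Mathlib

open Finset

/-- `IsRGF w` : `w = a₁⋯aₙ` is a restricted growth function: all letters are
positive, the first letter is `1` and each later letter is at most one more
than the maximum of the preceding prefix. -/
def IsRGF (w : List ℕ) : Prop :=
  (∀ a ∈ w, 1 ≤ a) ∧
  (0 < w.length → w.getD 0 0 = 1) ∧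
  (∀ j : ℕ, j + 1 < w.length →
    w.getD (j + 1) 0 ≤ 1 + (w.take (j + 1)).foldr max 0)

/-- The set partition encoded by the word `w` contains the set-partition
pattern encoded by the word `p`:  there are positions, listed increasingly,
whose "same block" (= same letter) pattern in `w` is exactly that of `p`. -/
def ContainsPat (w p : List ℕ) : Prop :=
  ∃ f : Fin p.length → Fin w.length, StrictMono f ∧
    ∀ a b : Fin p.length, (w.get (f a) = w.get (f b) ↔ p.get a = p.get b)

/-- `Rn n p` : the restricted growth functions of length `n` whose associated
set partition avoids the pattern (of set partitions) encoded by the RGF `p`.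
Via the standard bijection `σ ↦ w(σ)` this is `R_n(π) ≅ Π_n(π)`.
Patterns of `[3]`:  `1/2/3 ↦ [1,2,3]`, `1/23 ↦ [1,2,2]`, `13/2 ↦ [1,2,1]`,
`12/3 ↦ [1,1,2]`, `123 ↦ [1,1,1]`. -/
def Rn (n : ℕ) (p : List ℕ) : Set (List ℕ) :=
  {w | w.length = n ∧ IsRGF w ∧ ¬ ContainsPat w p}

/-- `lb` : sum over positions `j` of the number of distinct values occurring
before position `j` that are bigger than the letter at `j`. -/
def statLB (w : List ℕ) : ℕ :=
  ∑ j ∈ Finset.range w.length,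
    ((w.take j).toFinset.filter (fun v => w.getD j 0 < v)).card

/-- `ls` : left and smaller. -/
def statLS (w : List ℕ) : ℕ :=
  ∑ j ∈ Finset.range w.length,
    ((w.take j).toFinset.filter (fun v => v < w.getD j 0)).card

/-- `rb` : right and bigger. -/
def statRB (w : List ℕ) : ℕ :=
  ∑ j ∈ Finset.range w.length,
    ((w.drop (j + 1)).toFinset.filter (fun v => w.getD j 0 < v)).card

/-- `rs` : right and smaller. -/
def statRS (w : List ℕ) : ℕ :=
  ∑ j ∈ Finset.range w.length,
    ((w.drop (j + 1)).toFinset.filter (fun v => v < w.getD j 0)).card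

/-- The four–variable generating function
`F_n(π;q,r,s,t) = ∑_{σ∈Π_n(π)} q^{lb} r^{ls} s^{rb} t^{rs}`, with
`q = X 0`, `r = X 1`, `s = X 2`, `t = X 3`. -/
noncomputable def Fgen (n : ℕ) (p : List ℕ) : MvPolynomial (Fin 4) ℤ :=
  ∑ᶠ w ∈ Rn n p,
    (MvPolynomial.X 0 : MvPolynomial (Fin 4) ℤ) ^ statLB w *
      MvPolynomial.X 1 ^ statLS w *
      MvPolynomial.X 2 ^ statRB w *
      MvPolynomial.X 3 ^ statRS w

/-- `LB_n(π;q)`. -/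
noncomputable def LBp (n : ℕ) (p : List ℕ) : Polynomial ℤ :=
  ∑ᶠ w ∈ Rn n p, Polynomial.X ^ statLB w

/-- `LS_n(π;q)`. -/
noncomputable def LSp (n : ℕ) (p : List ℕ) : Polynomial ℤ :=
  ∑ᶠ w ∈ Rn n p, Polynomial.X ^ statLS w

/-- `RB_n(π;q)`. -/
noncomputable def RBp (n : ℕ) (p : List ℕ) : Polynomial ℤ :=
  ∑ᶠ w ∈ Rn n p, Polynomial.X ^ statRB w

/-- `RS_n(π;q)`. -/
noncomputable def RSp (n : ℕ) (p : List ℕ) : Polynomial ℤ :=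
  ∑ᶠ w ∈ Rn n p, Polynomial.X ^ statRS w
lemma foldr_max_append (L : List ℕ) (a : ℕ) :
    (L ++ [a]).foldr max 0 = max (L.foldr max 0) a := by
  induction L with
  | nil => simp
  | cons x xs ih => simp [ih]

lemma le_foldr_max (L : List ℕ) (a : ℕ) (h : a ∈ L) : a ≤ L.foldr max 0 := by
  induction L with
  | nil => simp at h
  | cons x xs ih =>
    rcases List.mem_cons.1 h with h | h
    · simp [h]
    · have := ih h; simp; omega

lemma getD_base (l m i : ℕ) :
    (List.replicate l 1 ++ List.range' 2 m).getD i 0 =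
      if i < l then 1 else if i < l + m then i - l + 2 else 0 := by
  by_cases h1 : i < l
  · rw [List.getD_eq_getElem _ _ (by simp; omega)]
    rw [List.getElem_append_left (by simpa using h1)]
    simp [h1]
  · by_cases h2 : i < l + m
    · rw [List.getD_eq_getElem _ _ (by simp; omega)]
      rw [List.getElem_append_right (by simpa using h1)]
      rw [if_neg h1, if_pos h2]
      simp [List.getElem_range']
      omega
    · rw [List.getD_eq_default _ _ (by simp; omega)]
      simp [h1, h2]

lemma getD_ins (base : List ℕ) (j i : ℕ) (hj : j ≤ base.length) :
    (base.take j ++ 1 :: base.drop j).getD i 0 =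
      if i < j then base.getD i 0 else if i = j then 1 else base.getD (i-1) 0 := by
  have hlt : (base.take j).length = j := by simp [hj]
  by_cases h1 : i < j
  · rw [List.getD_eq_getElem _ _ (by simp; omega)]
    rw [List.getElem_append_left (by omega)]
    rw [List.getElem_take]
    rw [if_pos h1]
    exact (List.getD_eq_getElem base 0 (show i < base.length by omega)).symm
  · rw [if_neg h1]
    by_cases h2 : i = j
    · subst h2
      rw [List.getD_eq_getElem _ _ (by simp; omega)]
      rw [List.getElem_append_right (by omega)]
      simp [hlt]
    · rw [if_neg h2]
      by_cases h3 : i - 1 < base.length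
      · rw [List.getD_eq_getElem _ _ (by simp; omega)]
        rw [List.getElem_append_right (by omega)]
        simp only [hlt]
        rw [← List.getD_eq_getElem (1 :: List.drop j base) 0]
        have heq : i - j = (i - j - 1) + 1 := by omega
        rw [heq, List.getD_cons_succ]
        rw [List.getD_eq_getElem _ _ (show i - j - 1 < (List.drop j base).length by simp; omega)]
        rw [List.getElem_drop]
        rw [List.getD_eq_getElem _ _ (show i - 1 < base.length by omega)]
        congr 1
        omega
      · rw [List.getD_eq_default _ _ (by simp; omega)]
        rw [List.getD_eq_default _ _ (by omega)]

def Avoids (w : List ℕ) : Prop :=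
  ∀ i p k : ℕ, i < p → p < k → k < w.length →
    w.getD p 0 = w.getD k 0 → w.getD i 0 = w.getD p 0

lemma not_contains_of_avoids {w : List ℕ} (h : Avoids w) : ¬ ContainsPat w [1,2,2] := by
  rintro ⟨f, hf, hiff⟩
  set a0 : Fin ([1,2,2] : List ℕ).length := ⟨0, by decide⟩
  set a1 : Fin ([1,2,2] : List ℕ).length := ⟨1, by decide⟩
  set a2 : Fin ([1,2,2] : List ℕ).length := ⟨2, by decide⟩
  have h01 : f a0 < f a1 := hf (by decide)
  have h12 : f a1 < f a2 := hf (by decide)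
  have e12 : w.get (f a1) = w.get (f a2) := (hiff a1 a2).2 rfl
  have e01 : w.get (f a0) ≠ w.get (f a1) := fun hc => by
    have h2 := (hiff a0 a1).1 hc
    simp [a0, a1, List.get] at h2
  have hg : ∀ a : Fin ([1,2,2] : List ℕ).length,
      w.get (f a) = w.getD (f a : ℕ) 0 := fun a =>
    (List.getD_eq_getElem w 0 (f a).isLt).symm
  have := h (f a0) (f a1) (f a2) h01 h12 (f a2).isLt (by rw [← hg a1, ← hg a2]; exact e12)
  exact e01 (by rw [hg a0, hg a1]; exact this)

lemma avoids_of_not_contains {w : List ℕ} (h : ¬ ContainsPat w [1,2,2]) : Avoids w := by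
  intro i p k hip hpk hk hpkv
  by_contra hne
  apply h
  refine ⟨![⟨i, by omega⟩, ⟨p, by omega⟩, ⟨k, hk⟩], ?_, ?_⟩
  · intro a b hab
    fin_cases a <;> fin_cases b <;>
      first
      | exact absurd hab (by decide)
      | (simp [Fin.lt_def]; omega)
  · have hgi : w.get ⟨i, by omega⟩ = w.getD i 0 := (List.getD_eq_getElem w 0 (by omega)).symm
    have hgp : w.get ⟨p, by omega⟩ = w.getD p 0 := (List.getD_eq_getElem w 0 (by omega)).symm
    have hgk : w.get ⟨k, hk⟩ = w.getD k 0 := (List.getD_eq_getElem w 0 hk).symm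
    have hik : w.getD i 0 ≠ w.getD k 0 := by rw [hpkv] at hne; exact hne
    intro a b
    fin_cases a <;> fin_cases b <;>
      simp_all [List.get, Matrix.cons_val_zero, Matrix.cons_val_one] <;> exact fun hh => hne hh.symm

def Cnt (w : List ℕ) (i : ℕ) : ℕ :=
  ((Finset.range i).filter (fun t => w.getD t 0 ≠ 1)).card

lemma cnt_succ (w : List ℕ) (i : ℕ) :
    Cnt w (i + 1) = Cnt w i + (if w.getD i 0 ≠ 1 then 1 else 0) := by
  unfold Cnt
  rw [Finset.range_add_one, Finset.filter_insert]
  by_cases h : w.getD i 0 ≠ 1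
  · rw [if_pos h, if_pos h, Finset.card_insert_of_notMem (by simp)]
  · rw [if_neg h, if_neg h]; simp

lemma key (w : List ℕ)
    (hpos : ∀ t, t < w.length → 1 ≤ w.getD t 0)
    (h0 : 0 < w.length → w.getD 0 0 = 1)
    (hstep : ∀ j : ℕ, j + 1 < w.length →
      w.getD (j + 1) 0 ≤ 1 + (w.take (j + 1)).foldr max 0)
    (hav : Avoids w) :
    ∀ i, i < w.length →
      ((w.take (i+1)).foldr max 0 = 1 + Cnt w (i+1)) ∧
      (w.getD i 0 = 1 ∨ w.getD i 0 = 2 + Cnt w i) ∧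
      (∀ v, 1 ≤ v → v ≤ 1 + Cnt w (i+1) → ∃ t, t ≤ i ∧ w.getD t 0 = v) := by
  intro i
  induction i with
  | zero =>
    intro hi
    have h00 := h0 hi
    have htake : w.take 1 = [w.getD 0 0] := by
      rw [List.getD_eq_getElem w 0 hi]
      rw [List.take_one]
      simp [List.head?_eq_getElem?, List.getElem?_eq_getElem hi]
    have hc1 : Cnt w 1 = 0 := by
      rw [show (1:ℕ) = 0 + 1 from rfl, cnt_succ, h00]
      simp [Cnt]
    refine ⟨by rw [htake, h00, hc1]; rfl, Or.inl h00, ?_⟩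
    intro v hv1 hv2
    simp only [Nat.zero_add] at hv2
    exact ⟨0, le_refl 0, by omega⟩
  | succ i ih =>
    intro hi
    obtain ⟨hmax, _, hsurj⟩ := ih (by omega)
    have htake : w.take (i+1+1) = w.take (i+1) ++ [w.getD (i+1) 0] := by
      rw [List.take_succ, List.getD_eq_getElem w 0 hi, List.getElem?_eq_getElem hi]
      rfl
    have hub := hstep i hi
    rw [hmax] at hub
    by_cases h1 : w.getD (i+1) 0 = 1
    · have hc : Cnt w (i+1+1) = Cnt w (i+1) := by
        rw [cnt_succ, if_neg (not_not_intro h1)]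
        omega
      refine ⟨?_, Or.inl h1, ?_⟩
      · rw [htake, foldr_max_append, hmax, h1, hc]; omega
      · intro v hv1 hv2
        obtain ⟨t, ht, hvt⟩ := hsurj v hv1 (by omega)
        exact ⟨t, by omega, hvt⟩
    · have hv2 : w.getD (i+1) 0 = 2 + Cnt w (i+1) := by
        rcases Nat.lt_or_ge (w.getD (i+1) 0) (2 + Cnt w (i+1)) with hlt | hge
        · exfalso
          have hp1 : 1 ≤ w.getD (i+1) 0 := hpos _ hi
          obtain ⟨t, ht, hvt⟩ := hsurj (w.getD (i+1) 0) hp1 (by omega)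
          rcases Nat.eq_zero_or_pos t with rfl | htpos
          · exact h1 (by rw [← hvt, h0 (by omega)])
          · have := hav 0 t (i+1) htpos (by omega) hi hvt
            rw [hvt, h0 (by omega)] at this
            exact h1 this.symm
        · omega
      have hc : Cnt w (i+1+1) = Cnt w (i+1) + 1 := by
        rw [cnt_succ, if_pos h1]
      refine ⟨?_, Or.inr hv2, ?_⟩
      · rw [htake, foldr_max_append, hmax, hv2, hc]; omega
      · intro v hv1 hvle
        rcases Nat.lt_or_ge v (2 + Cnt w (i+1)) with hlt | hge
        · obtain ⟨t, ht, hvt⟩ := hsurj v hv1 (by omega)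
          exact ⟨t, by omega, hvt⟩
        · exact ⟨i+1, le_refl _, by omega⟩

lemma forward (w : List ℕ) (n : ℕ) (hlen : w.length = n) (hn : 1 ≤ n)
    (hpos : ∀ t, t < w.length → 1 ≤ w.getD t 0)
    (h0 : 0 < w.length → w.getD 0 0 = 1)
    (hstep : ∀ j : ℕ, j + 1 < w.length →
      w.getD (j + 1) 0 ≤ 1 + (w.take (j + 1)).foldr max 0)
    (hav : Avoids w) :
    ∃ l m j : ℕ, 1 ≤ m ∧ l + m = n ∧
      j ≤ (List.replicate l 1 ++ List.range' 2 (m - 1)).length ∧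
      w = (List.replicate l 1 ++ List.range' 2 (m - 1)).take j
          ++ 1 :: (List.replicate l 1 ++ List.range' 2 (m - 1)).drop j := by
  have h00 : w.getD 0 0 = 1 := h0 (by omega)
  have K := key w hpos h0 hstep hav
  obtain ⟨j₀, hj₀⟩ : ∃ j₀, j₀ = Nat.findGreatest (fun t => w.getD t 0 = 1) (n-1) :=
    ⟨_, rfl⟩
  have hj₀p : w.getD j₀ 0 = 1 := by
    rw [hj₀]
    exact Nat.findGreatest_spec (P := fun t => w.getD t 0 = 1) (m := 0) (by omega) h00
  have hj₀le : j₀ ≤ n - 1 := by rw [hj₀]; exact Nat.findGreatest_le _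
  have hgt : ∀ t, j₀ < t → t ≤ n - 1 → w.getD t 0 ≠ 1 := by
    intro t h1 h2
    rw [hj₀] at h1
    exact Nat.findGreatest_is_greatest (P := fun t => w.getD t 0 = 1) h1 h2
  have hdc : ∀ p, p < j₀ → w.getD p 0 = 1 → ∀ t, t < p → w.getD t 0 = 1 := by
    intro p hp hp1 t ht
    have := hav t p j₀ ht hp (by omega) (by rw [hp1]; exact hj₀p.symm)
    rw [this, hp1]
  set T : Finset ℕ := (Finset.range j₀).filter (fun i => w.getD i 0 = 1) with hT
  set l : ℕ := T.card with hl
  have hlle : l ≤ j₀ := le_trans (Finset.card_filter_le _ _) (by simp)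
  have h_not1 : ∀ i, l ≤ i → i < j₀ → w.getD i 0 ≠ 1 := by
    intro i hli hij hcon
    have hsub : Finset.range (i+1) ⊆ T := by
      intro t ht
      rw [Finset.mem_range] at ht
      rw [hT, Finset.mem_filter, Finset.mem_range]
      rcases Nat.lt_or_ge t i with h | h
      · exact ⟨by omega, hdc i hij hcon t h⟩
      · have : t = i := by omega
        exact ⟨by omega, this ▸ hcon⟩
    have := Finset.card_le_card hsub
    rw [Finset.card_range] at this
    omega
  have h_is1 : ∀ i, i < l → w.getD i 0 = 1 := by
    have hTsub : T ⊆ Finset.range l := by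
      intro p hp
      rw [hT, Finset.mem_filter, Finset.mem_range] at hp
      rw [Finset.mem_range]
      by_contra hge
      exact h_not1 p (by omega) hp.1 hp.2
    have hTeq : T = Finset.range l :=
      Finset.eq_of_subset_of_card_le hTsub (by rw [Finset.card_range])
    intro i hi
    have : i ∈ T := by rw [hTeq, Finset.mem_range]; exact hi
    rw [hT, Finset.mem_filter] at this
    exact this.2
  -- Cnt computations
  have hc1 : ∀ i, i ≤ l → Cnt w i = 0 := by
    intro i hi
    simp only [Cnt, Finset.card_eq_zero, Finset.filter_eq_empty_iff]
    intro t ht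
    rw [Finset.mem_range] at ht
    exact not_not_intro (h_is1 t (by omega))
  have hc2 : ∀ i, l ≤ i → i ≤ j₀ → Cnt w i = i - l := by
    intro i hli hij
    have : (Finset.range i).filter (fun t => w.getD t 0 ≠ 1) = Finset.Ico l i := by
      ext t
      rw [Finset.mem_filter, Finset.mem_range, Finset.mem_Ico]
      constructor
      · rintro ⟨h1, h2⟩
        refine ⟨?_, h1⟩
        by_contra hlt
        exact h2 (h_is1 t (by omega))
      · rintro ⟨h1, h2⟩
        exact ⟨h2, h_not1 t h1 (by omega)⟩
    simp only [Cnt]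
    rw [this, Nat.card_Ico]
  have hc3 : ∀ i, j₀ < i → i ≤ n → Cnt w i = i - l - 1 := by
    intro i hji hin
    have heq : (Finset.range i).filter (fun t => w.getD t 0 ≠ 1) =
        Finset.Ico l i \ {j₀} := by
      ext t
      rw [Finset.mem_filter, Finset.mem_range, Finset.mem_sdiff, Finset.mem_Ico,
        Finset.mem_singleton]
      constructor
      · rintro ⟨h1, h2⟩
        refine ⟨⟨?_, h1⟩, ?_⟩
        · by_contra hlt
          exact h2 (h_is1 t (by omega))
        · intro hc; exact h2 (hc ▸ hj₀p)
      · rintro ⟨⟨h1, h2⟩, h3⟩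
        refine ⟨h2, ?_⟩
        rcases Nat.lt_or_ge t j₀ with h | h
        · exact h_not1 t h1 h
        · exact hgt t (by omega) (by omega)
    simp only [Cnt]
    rw [heq, Finset.card_sdiff_of_subset (by simp [Finset.mem_Ico]; omega), Nat.card_Ico]
    simp
  -- value formulas
  have hval2 : ∀ i, l ≤ i → i < j₀ → w.getD i 0 = i - l + 2 := by
    intro i hli hij
    rcases (K i (by omega)).2.1 with h | h
    · exact absurd h (h_not1 i hli hij)
    · rw [h, hc2 i hli (by omega)]; omega
  have hval4 : ∀ i, j₀ < i → i < n → w.getD i 0 = i - l + 1 := by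
    intro i hji hin
    rcases (K i (by omega)).2.1 with h | h
    · exact absurd h (hgt i hji (by omega))
    · rw [h, hc3 i hji (by omega)]; omega
  -- assemble
  refine ⟨l, n - l, j₀, by omega, by omega, ?_, ?_⟩
  · simp only [List.length_append, List.length_replicate, List.length_range']
    omega
  · have hbl : (List.replicate l 1 ++ List.range' 2 (n - l - 1)).length = n - 1 := by
      simp only [List.length_append, List.length_replicate, List.length_range']
      omega
    have hml : n - l - 1 = (n - l) - 1 := by omega
    apply List.ext_getElem
    · rw [hlen]
      simp only [List.length_append, List.length_take, List.length_cons,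
        List.length_drop, hbl]
      omega
    · intro i h1 h2
      rw [← List.getD_eq_getElem w 0 h1, ← List.getD_eq_getElem _ 0 h2]
      rw [getD_ins _ _ _ (by rw [hbl]; omega)]
      rw [hlen] at h1
      rcases Nat.lt_or_ge i j₀ with hij | hij
      · rw [if_pos hij, getD_base]
        rcases Nat.lt_or_ge i l with hil | hil
        · rw [if_pos hil]
          exact h_is1 i hil
        · rw [if_neg (by omega), if_pos (by omega), hval2 i hil hij]
      · rcases Nat.eq_or_lt_of_le hij with heq | hgt2
        · rw [if_neg (by omega), if_pos heq.symm, ← heq]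
          exact hj₀p
        · rw [if_neg (by omega), if_neg (by omega), getD_base]
          rw [if_neg (by omega), if_pos (by omega)]
          rw [hval4 i hgt2 h1]
          omega

set_option maxHeartbeats 2000000 in
lemma backward (w : List ℕ) (n l m j : ℕ) (hlen : w.length = n)
    (hm : 1 ≤ m) (hlm : l + m = n)
    (hj : j ≤ (List.replicate l 1 ++ List.range' 2 (m - 1)).length)
    (hw : w = (List.replicate l 1 ++ List.range' 2 (m - 1)).take j
        ++ 1 :: (List.replicate l 1 ++ List.range' 2 (m - 1)).drop j) :
    Avoids w := by
  have hbl : (List.replicate l 1 ++ List.range' 2 (m - 1)).length = l + (m-1) := by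
    simp
  rw [hbl] at hj
  have hval : ∀ i : ℕ, w.getD i 0 =
      if i < j then (if i < l then 1 else if i < l + (m-1) then i - l + 2 else 0)
      else if i = j then 1
      else (if i - 1 < l then 1 else if i - 1 < l + (m-1) then i - 1 - l + 2 else 0) := by
    intro i
    rw [hw, getD_ins _ _ _ (by rw [hbl]; omega), getD_base, getD_base]
  intro i p k hip hpk hk hpkv
  rw [hlen] at hk
  rw [hval p, hval k] at hpkv
  rw [hval i, hval p]
  split_ifs at hpkv ⊢ <;> omega

/-- For every `n ≥ 1`, `R_n(1/23)` equals the set of RGFs `w` of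
length `n` obtained from a word `1^l 2 3 ⋯ m` (with `l ≥ 0`, `m ≥ 1`,
`l + m = n`) by inserting a single additional letter `1` at some position,
the result being an RGF. -/
theorem stmt1 (n : ℕ) (hn : 1 ≤ n) :
    Rn n [1, 2, 2] =
      {w : List ℕ | w.length = n ∧ IsRGF w ∧
        ∃ l m j : ℕ, 1 ≤ m ∧ l + m = n ∧
          j ≤ (List.replicate l 1 ++ List.range' 2 (m - 1)).length ∧
          w = (List.replicate l 1 ++ List.range' 2 (m - 1)).take j
              ++ 1 :: (List.replicate l 1 ++ List.range' 2 (m - 1)).drop j} := by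
  ext w
  simp only [Rn, Set.mem_setOf_eq]
  constructor
  · rintro ⟨hlen, hrgf, hnc⟩
    refine ⟨hlen, hrgf, ?_⟩
    exact forward w n hlen hn
      (fun t ht => hrgf.1 _ (by
        rw [List.getD_eq_getElem w 0 ht]
        exact List.getElem_mem ht))
      hrgf.2.1 hrgf.2.2 (avoids_of_not_contains hnc)
  · rintro ⟨hlen, hrgf, l, m, j, hm, hlm, hj, hw⟩
    exact ⟨hlen, hrgf, not_contains_of_avoids (backward w n l m j hlen hm hlm hj hw)⟩
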